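/- arXiv:2402.13997 — 2 statements merged into one kernel-verified Lean document; each statement's English description precedes it below -/
import Mathlib

section
/- For any real numbers x ≥ y ≥ 10, Σ_{d > x, P(d) ≤ y} 1/d ≪ (log y)³ / x^{1/log y}, where the sum is over positive integers d > x all of whose prime factors are at most y and the implied constant is absolute. -/
open Real Filter Finset

open scoped Classical

noncomputable def theta (n : ℕ) : ℝ := ∑ p ∈ (n + 1).primesBelow, Real.log p

lemma theta_one : theta 1 = 0 := by
  have : (2 : ℕ).primesBelow = ∅ := by decide
  simp [theta, this]

lemma theta_le (n : ℕ) : theta n ≤ Real.log 4 * n := by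
  have h1 : theta n = Real.log (primorial n) := by
    rw [primorial]
    push_cast
    rw [Real.log_prod]
    · rfl
    · intro p hp
      have := Nat.prime_of_mem_primesBelow (n := n + 1) (by simpa [Nat.primesBelow] using hp)
      exact_mod_cast this.pos.ne'
  rw [h1]
  calc Real.log (primorial n) ≤ Real.log (4 ^ n) := by
        apply Real.log_le_log (by exact_mod_cast primorial_pos n)
        exact_mod_cast primorial_le_4_pow n
    _ = Real.log 4 * n := by rw [Real.log_pow]; ring

lemma theta_diff {n : ℕ} (hn : 1 ≤ n) :
    theta n - theta (n - 1) = if n.Prime then Real.log n else 0 := by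
  have h1 : n - 1 + 1 = n := Nat.succ_pred_eq_of_pos hn
  unfold theta
  rw [h1, Nat.primesBelow_succ]
  split
  · rw [Finset.sum_insert (Nat.notMem_primesBelow n)]; ring
  · ring

lemma theta_nonneg (n : ℕ) : 0 ≤ theta n := by
  apply Finset.sum_nonneg
  intro p hp
  have := (Nat.prime_of_mem_primesBelow hp).two_le
  apply Real.log_nonneg
  have h2 : (1:ℕ) ≤ p := (by norm_num : (1:ℕ) ≤ 2).trans this
  exact_mod_cast h2
lemma abel_aux (f : ℕ → ℝ) (hf : ∀ n, 2 ≤ n → f (n + 1) ≤ f n) :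
    ∀ N, 2 ≤ N →
      (∑ n ∈ Finset.Icc 2 N, (theta n - theta (n - 1)) * f n) +
        (Real.log 4 * N - theta N) * f N ≤
      Real.log 4 * (f 2 + ∑ n ∈ Finset.Icc 2 N, f n) := by
  intro N hN
  induction N with
  | zero => omega
  | succ N ih =>
    rcases Nat.lt_or_ge N 2 with h2 | h2
    · -- N + 1 = 2
      have hN2 : N = 1 := by omega
      subst hN2
      rw [show (2:ℕ) = 1 + 1 from rfl] at *
      simp only [Finset.Icc_self, Finset.sum_singleton]
      have h1 : theta (1 + 1 - 1) = 0 := theta_one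
      rw [h1]
      push_cast
      ring_nf
      nlinarith [theta_le 2, theta_nonneg 2]
    · have ih' := ih h2
      rw [Finset.sum_Icc_succ_top (by omega : 2 ≤ N + 1),
          Finset.sum_Icc_succ_top (by omega : 2 ≤ N + 1)]
      have hdiff : (N + 1 : ℕ) - 1 = N := by omega
      rw [hdiff]
      have hfa : f (N + 1) ≤ f N := hf N h2
      have hth : theta N ≤ Real.log 4 * N := theta_le N
      have key : (Real.log 4 * N - theta N) * f (N + 1) ≤ (Real.log 4 * N - theta N) * f N :=
        mul_le_mul_of_nonneg_left hfa (by linarith)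
      push_cast
      nlinarith [key, ih']
lemma primesBelow_eq_filter (N : ℕ) :
    (N + 1).primesBelow = (Finset.Icc 2 N).filter Nat.Prime := by
  ext p
  simp only [Nat.mem_primesBelow, Finset.mem_filter, Finset.mem_Icc]
  constructor
  · rintro ⟨h1, h2⟩
    exact ⟨⟨h2.two_le, by omega⟩, h2⟩
  · rintro ⟨⟨h1, h2⟩, h3⟩
    exact ⟨by omega, h3⟩

lemma prime_sum_le (f : ℕ → ℝ) (hf : ∀ n, 2 ≤ n → f (n + 1) ≤ f n)
    (hf0 : ∀ n, 2 ≤ n → 0 ≤ f n) (N : ℕ) (hN : 2 ≤ N) :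
    ∑ p ∈ (N + 1).primesBelow, Real.log p * f p ≤
      Real.log 4 * (f 2 + ∑ n ∈ Finset.Icc 2 N, f n) := by
  have h1 : ∑ p ∈ (N + 1).primesBelow, Real.log p * f p =
      ∑ n ∈ Finset.Icc 2 N, (theta n - theta (n - 1)) * f n := by
    rw [primesBelow_eq_filter, Finset.sum_filter]
    apply Finset.sum_congr rfl
    intro n hn
    have hn2 : 2 ≤ n := (Finset.mem_Icc.mp hn).1
    rw [theta_diff (by omega : 1 ≤ n)]
    split <;> simp
  rw [h1]
  have h2 := abel_aux f hf N hN
  have h3 : 0 ≤ (Real.log 4 * N - theta N) * f N :=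
    mul_nonneg (by linarith [theta_le N]) (hf0 N hN)
  linarith
lemma log_succ_gap (N : ℕ) (hN : 1 ≤ N) :
    1 / ((N : ℝ) + 1) ≤ Real.log (N + 1) - Real.log N := by
  have hN0 : (0:ℝ) < N := by exact_mod_cast hN
  have h1 : Real.log ((N : ℝ) / (N + 1)) ≤ (N : ℝ) / (N + 1) - 1 :=
    Real.log_le_sub_one_of_pos (by positivity)
  rw [Real.log_div (by positivity) (by positivity)] at h1
  have h2 : (N : ℝ) / (N + 1) - 1 = -(1 / (N + 1)) := by field_simp; ring
  linarith [h1, h2 ▸ h1]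

lemma sum_inv_le : ∀ N : ℕ, 2 ≤ N → ∑ n ∈ Finset.Icc 2 N, 1 / (n : ℝ) ≤ Real.log N := by
  intro N hN
  induction N with
  | zero => omega
  | succ N ih =>
    rcases Nat.lt_or_ge N 2 with h2 | h2
    · have : N = 1 := by omega
      subst this
      norm_num [Finset.Icc_self]
      nlinarith [Real.log_two_gt_d9]
    · rw [Finset.sum_Icc_succ_top (by omega : 2 ≤ N + 1)]
      have := log_succ_gap N (by omega)
      have := ih h2
      push_cast
      linarith

lemma sum_inv_log_le : ∀ N : ℕ, 2 ≤ N →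
    ∑ n ∈ Finset.Icc 2 N, 1 / ((n : ℝ) * Real.log n) ≤ Real.log (Real.log N) + 2 := by
  intro N hN
  induction N with
  | zero => omega
  | succ N ih =>
    rcases Nat.lt_or_ge N 2 with h2 | h2
    · have : N = 1 := by omega
      subst this
      norm_num [Finset.Icc_self]
      -- 1 / (2 * log 2) ≤ log (log 2) + 2
      have hl2 : (0.6931471803:ℝ) < Real.log 2 := Real.log_two_gt_d9
      have hl2' : Real.log 2 < 0.6931471808 := Real.log_two_lt_d9
      have key : 1 - (Real.log 2)⁻¹ ≤ Real.log (Real.log 2) := by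
        have := Real.log_le_sub_one_of_pos (x := (Real.log 2)⁻¹) (by positivity)
        rw [Real.log_inv] at this
        linarith
      have h1 : (Real.log 2)⁻¹ ≤ 1.45 := by
        rw [inv_le_comm₀ (by linarith) (by norm_num)]
        linarith
      have h2 : 1 / (2 * Real.log 2) ≤ 0.73 := by
        rw [div_le_iff₀ (by linarith)]
        linarith
      linarith
    · rw [Finset.sum_Icc_succ_top (by omega : 2 ≤ N + 1)]
      have hN0 : (2:ℝ) ≤ N := by exact_mod_cast h2
      have hlogN : 0 < Real.log N := Real.log_pos (by linarith)
      have hlogN1 : 0 < Real.log ((N:ℝ) + 1) := Real.log_pos (by linarith)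
      have hmono : Real.log (N:ℝ) ≤ Real.log ((N:ℝ)+1) := Real.log_le_log (by linarith) (by linarith)
      have gap : 1 / (((N:ℝ) + 1) * Real.log ((N:ℝ)+1)) ≤
          Real.log (Real.log ((N:ℝ)+1)) - Real.log (Real.log N) := by
        have h1 : Real.log (Real.log (N:ℝ) / Real.log ((N:ℝ)+1)) ≤
            Real.log (N:ℝ) / Real.log ((N:ℝ)+1) - 1 :=
          Real.log_le_sub_one_of_pos (by positivity)
        rw [Real.log_div hlogN.ne' hlogN1.ne'] at h1
        have h2 : Real.log (Real.log ((N:ℝ)+1)) - Real.log (Real.log N) ≥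
            1 - Real.log (N:ℝ) / Real.log ((N:ℝ)+1) := by linarith
        have h3 : 1 - Real.log (N:ℝ) / Real.log ((N:ℝ)+1) =
            (Real.log ((N:ℝ)+1) - Real.log (N:ℝ)) / Real.log ((N:ℝ)+1) := by
          field_simp
        have h4 := log_succ_gap N (by omega)
        have h5 : 1 / (((N:ℝ) + 1) * Real.log ((N:ℝ)+1)) ≤
            (Real.log ((N:ℝ)+1) - Real.log (N:ℝ)) / Real.log ((N:ℝ)+1) := by
          rw [div_le_div_iff₀ (by positivity) hlogN1]
          have hp : (0:ℝ) < (N:ℝ) + 1 := by linarith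
          have h6 := mul_le_mul_of_nonneg_right h4 (le_of_lt (mul_pos hp hlogN1))
          have h7 : (1/((N:ℝ)+1)) * (((N:ℝ)+1) * Real.log ((N:ℝ)+1)) =
              Real.log ((N:ℝ)+1) := by field_simp
          linarith
        linarith [h1, h3, h5]
      have := ih h2
      push_cast
      linarith [gap, this]

lemma sum_inv_sq_le : ∀ N : ℕ, 2 ≤ N → ∑ n ∈ Finset.Icc 2 N, 1 / (n : ℝ) ^ 2 ≤ 1 - 1 / (N:ℝ) := by
  intro N hN
  induction N with
  | zero => omega
  | succ N ih =>
    rcases Nat.lt_or_ge N 2 with h2 | h2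
    · have : N = 1 := by omega
      subst this
      norm_num [Finset.Icc_self]
    · rw [Finset.sum_Icc_succ_top (by omega : 2 ≤ N + 1)]
      have hN0 : (2:ℝ) ≤ N := by exact_mod_cast h2
      have key : 1 / ((N:ℝ)+1)^2 ≤ 1 / N - 1 / ((N:ℝ)+1) := by
        rw [div_sub_div _ _ (by linarith) (by linarith)]
        rw [div_le_div_iff₀ (by positivity) (by positivity)]
        ring_nf
        nlinarith
      have := ih h2
      push_cast
      linarith
lemma sum_one_div_prime_le (N : ℕ) (hN : 2 ≤ N) :
    ∑ p ∈ (N + 1).primesBelow, 1 / (p : ℝ) ≤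
      Real.log 4 * (Real.log (Real.log N) + 3) := by
  have hconv : ∑ p ∈ (N + 1).primesBelow, 1 / (p : ℝ) =
      ∑ p ∈ (N + 1).primesBelow, Real.log p * (1 / ((p : ℝ) * Real.log p)) := by
    apply Finset.sum_congr rfl
    intro p hp
    have hp2 : 2 ≤ p := (Nat.prime_of_mem_primesBelow hp).two_le
    have hp2' : (2:ℝ) ≤ (p:ℝ) := by exact_mod_cast hp2
    have hlp : 0 < Real.log p := Real.log_pos (by linarith)
    field_simp
  rw [hconv]
  have hanti : ∀ n : ℕ, 2 ≤ n → 1 / (((n:ℕ)+1 : ℕ) * Real.log ((n:ℕ)+1 : ℕ) : ℝ)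
      ≤ 1 / ((n : ℝ) * Real.log n) := by
    intro n hn
    have hn2 : (2:ℝ) ≤ (n:ℝ) := by exact_mod_cast hn
    have h1 : 0 < Real.log n := Real.log_pos (by linarith)
    have h2 : Real.log (n:ℝ) ≤ Real.log ((n:ℝ)+1) := Real.log_le_log (by linarith) (by linarith)
    push_cast
    apply one_div_le_one_div_of_le (by positivity)
    apply mul_le_mul (by linarith) h2 h1.le (by linarith)
  have hpos : ∀ n : ℕ, 2 ≤ n → 0 ≤ 1 / ((n : ℝ) * Real.log n) := by
    intro n hn
    have hn2 : (2:ℝ) ≤ (n:ℝ) := by exact_mod_cast hn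
    have h1 : 0 < Real.log n := Real.log_pos (by linarith)
    positivity
  have key := prime_sum_le (fun n => 1 / ((n : ℝ) * Real.log n))
    (by intro n hn; push_cast; exact_mod_cast hanti n hn) hpos N hN
  have hsum := sum_inv_log_le N hN
  have hf2 : 1 / ((2 : ℝ) * Real.log 2) ≤ 1 := by
    rw [div_le_one (by positivity)]
    nlinarith [Real.log_two_gt_d9]
  have hL : 0 ≤ Real.log 4 := Real.log_nonneg (by norm_num)
  calc ∑ p ∈ (N + 1).primesBelow, Real.log p * (1 / ((p : ℝ) * Real.log p))
      ≤ Real.log 4 * (1 / ((2:ℕ) * Real.log (2:ℕ) : ℝ) +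
          ∑ n ∈ Finset.Icc 2 N, 1 / ((n : ℝ) * Real.log n)) := key
    _ ≤ Real.log 4 * (Real.log (Real.log N) + 3) := by
        apply mul_le_mul_of_nonneg_left _ hL
        push_cast
        linarith

lemma sum_logp_div_prime_le (N : ℕ) (hN : 2 ≤ N) :
    ∑ p ∈ (N + 1).primesBelow, Real.log p / (p : ℝ) ≤
      Real.log 4 * (1 + Real.log N) := by
  have hanti : ∀ n : ℕ, 2 ≤ n → 1 / (((n:ℕ)+1 : ℕ) : ℝ) ≤ 1 / (n : ℝ) := by
    intro n hn
    have hn2 : (2:ℝ) ≤ (n:ℝ) := by exact_mod_cast hn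
    push_cast
    apply one_div_le_one_div_of_le (by linarith) (by linarith)
  have hpos : ∀ n : ℕ, 2 ≤ n → 0 ≤ 1 / (n : ℝ) := by
    intro n hn; positivity
  have key := prime_sum_le (fun n => 1 / (n : ℝ))
    (by intro n hn; exact_mod_cast hanti n hn) hpos N hN
  have hsum := sum_inv_le N hN
  have hL : 0 ≤ Real.log 4 := Real.log_nonneg (by norm_num)
  have hconv : ∑ p ∈ (N + 1).primesBelow, Real.log p / (p : ℝ) =
      ∑ p ∈ (N + 1).primesBelow, Real.log p * (1 / (p : ℝ)) := by
    apply Finset.sum_congr rfl; intro p hp; ring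
  rw [hconv]
  calc ∑ p ∈ (N + 1).primesBelow, Real.log p * (1 / (p : ℝ))
      ≤ Real.log 4 * (1 / ((2:ℕ) : ℝ) + ∑ n ∈ Finset.Icc 2 N, 1 / (n : ℝ)) := key
    _ ≤ Real.log 4 * (1 + Real.log N) := by
        apply mul_le_mul_of_nonneg_left _ hL
        push_cast
        linarith

lemma sum_inv_sq_prime_le (N : ℕ) (hN : 2 ≤ N) :
    ∑ p ∈ (N + 1).primesBelow, 1 / (p : ℝ) ^ 2 ≤ 1 := by
  have hsub : (N + 1).primesBelow ⊆ Finset.Icc 2 N := by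
    rw [primesBelow_eq_filter]
    exact Finset.filter_subset _ _
  calc ∑ p ∈ (N + 1).primesBelow, 1 / (p : ℝ) ^ 2
      ≤ ∑ n ∈ Finset.Icc 2 N, 1 / (n : ℝ) ^ 2 :=
        Finset.sum_le_sum_of_subset_of_nonneg hsub (fun i _ _ => by positivity)
    _ ≤ 1 - 1 / (N : ℝ) := sum_inv_sq_le N hN
    _ ≤ 1 := by
        have : (0:ℝ) < N := by exact_mod_cast (by omega : 0 < N)
        have : 0 ≤ 1 / (N:ℝ) := by positivity
        linarith
noncomputable def rpowHom (c : ℝ) : ℕ →* ℝ where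
  toFun n := (n : ℝ) ^ c
  map_one' := by simp
  map_mul' m n := by
    push_cast
    exact Real.mul_rpow (Nat.cast_nonneg m) (Nat.cast_nonneg n)

@[simp] lemma rpowHom_apply (c : ℝ) (n : ℕ) : rpowHom c n = (n : ℝ) ^ c := rfl

lemma t_le_three_quarters {σ : ℝ} (hσ2 : σ ≤ 1 / 2) {p : ℝ} (hp2 : 2 ≤ p) :
    p ^ (σ - 1) ≤ 3 / 4 := by
  have h1 : p ^ (σ - 1) ≤ (2:ℝ) ^ (σ - 1) :=
    Real.rpow_le_rpow_of_nonpos (by norm_num) hp2 (by linarith)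
  have h2 : (2:ℝ) ^ (σ - 1) ≤ (2:ℝ) ^ (-(1/2) : ℝ) :=
    Real.rpow_le_rpow_of_exponent_le (by norm_num) (by linarith)
  have h3 : ((2:ℝ) ^ (-(1/2) : ℝ)) ^ (2:ℕ) = (2:ℝ) ^ (-1 : ℝ) := by
    rw [← Real.rpow_natCast ((2:ℝ) ^ (-(1/2) : ℝ)) 2, ← Real.rpow_mul (by norm_num)]
    norm_num
  have h4 : (2:ℝ) ^ (-1 : ℝ) = 1 / 2 := by
    rw [Real.rpow_neg (by norm_num), Real.rpow_one]; norm_num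
  have h5 : 0 ≤ (2:ℝ) ^ (-(1/2) : ℝ) := Real.rpow_nonneg (by norm_num) _
  nlinarith [h3, h4, h5, h1, h2]

lemma factor_bound {σ : ℝ} (hσ : 0 < σ) (hσ2 : σ ≤ 1 / 2) {p : ℕ} (hp : p.Prime)
    (hplog : σ * Real.log p ≤ 1) :
    (1 - (p : ℝ) ^ (σ - 1))⁻¹ ≤
      Real.exp (1 / p + 3 * σ * (Real.log p / p) + 64 / (p : ℝ) ^ 2) := by
  have hp2 : (2:ℝ) ≤ p := by exact_mod_cast hp.two_le
  have hp0 : (0:ℝ) < p := by linarith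
  set t := (p : ℝ) ^ (σ - 1) with ht_def
  have ht0 : 0 < t := Real.rpow_pos_of_pos hp0 _
  have ht34 : t ≤ 3 / 4 := t_le_three_quarters hσ2 hp2
  have h1t : 0 < 1 - t := by linarith
  -- (1-t)⁻¹ ≤ exp (t/(1-t))
  have hinv : (1 - t)⁻¹ ≤ Real.exp (t / (1 - t)) := by
    have hlog := Real.log_le_sub_one_of_pos (x := (1 - t)⁻¹) (by positivity)
    have heq : (1 - t)⁻¹ - 1 = t / (1 - t) := by field_simp; ring
    calc (1 - t)⁻¹ = Real.exp (Real.log (1 - t)⁻¹) := (Real.exp_log (by positivity)).symm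
      _ ≤ Real.exp (t / (1 - t)) := Real.exp_le_exp.mpr (by linarith)
  -- t/(1-t) ≤ t + 4 t²
  have htt : t / (1 - t) ≤ t + 4 * t ^ 2 := by
    rw [div_le_iff₀ h1t]
    nlinarith [ht0, ht34, sq_nonneg t]
  -- t ≤ (1 + 3 σ log p)/p
  set u := σ * Real.log p with hu_def
  have hu0 : 0 ≤ u := mul_nonneg hσ.le (Real.log_nonneg (by linarith))
  have hexpu : Real.exp u ≤ 1 + 3 * u := by
    have e1 : 1 - u ≤ Real.exp (-u) := by linarith [Real.add_one_le_exp (-u)]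
    have e2 : (1 - u) * Real.exp u ≤ 1 := by
      calc (1 - u) * Real.exp u ≤ Real.exp (-u) * Real.exp u :=
            mul_le_mul_of_nonneg_right e1 (Real.exp_pos u).le
        _ = 1 := by rw [← Real.exp_add]; simp
    have e3 : Real.exp u ≤ 3 := by
      calc Real.exp u ≤ Real.exp 1 := Real.exp_le_exp.mpr hplog
        _ ≤ 3 := by linarith [Real.exp_one_lt_d9]
    nlinarith [hu0, e2, e3]
  have ht_eq : t = Real.exp u / p := by
    rw [ht_def, Real.rpow_sub hp0, Real.rpow_one, Real.rpow_def_of_pos hp0]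
    ring_nf
    rw [hu_def, mul_comm σ]; ring
  have htp : t ≤ (1 + 3 * u) / p := by
    rw [ht_eq, div_le_div_iff_of_pos_right hp0]
    exact hexpu
  have ht4 : t ≤ 4 / p := by
    have : (1 + 3 * u) / p ≤ 4 / p := by
      rw [div_le_div_iff_of_pos_right hp0]
      nlinarith [hplog, hσ.le]
    linarith
  have hsq : 4 * t ^ 2 ≤ 64 / (p : ℝ) ^ 2 := by
    have h16 : t ^ 2 ≤ (4 / p) ^ 2 := pow_le_pow_left₀ ht0.le ht4 2
    have : (4 / (p:ℝ)) ^ 2 = 16 / (p : ℝ) ^ 2 := by rw [div_pow]; norm_num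
    rw [this] at h16
    have h64 : (64:ℝ) / (p : ℝ) ^ 2 = 4 * (16 / (p : ℝ) ^ 2) := by ring
    linarith
  calc (1 - t)⁻¹ ≤ Real.exp (t / (1 - t)) := hinv
    _ ≤ Real.exp (1 / p + 3 * σ * (Real.log p / p) + 64 / (p : ℝ) ^ 2) := by
        apply Real.exp_le_exp.mpr
        have : (1 + 3 * u) / p = 1 / p + 3 * σ * (Real.log p / p) := by
          rw [hu_def]; ring
        linarith [htt, htp, hsq]
lemma prod_bound {σ : ℝ} (hσ : 0 < σ) (hσ2 : σ ≤ 1 / 2) {N : ℕ} (hN : 10 ≤ N)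
    (hσlogN : σ * Real.log N ≤ 1) {B : ℝ} (hB : Real.log (Real.log N) ≤ B) (hB0 : 0 ≤ B) :
    ∏ p ∈ (N + 1).primesBelow, (1 - (p : ℝ) ^ (σ - 1))⁻¹ ≤ Real.exp (2 * B + 76) := by
  have hN2 : 2 ≤ N := by omega
  have hNR : (10:ℝ) ≤ (N:ℝ) := by exact_mod_cast hN
  have hlogN1 : 1 ≤ Real.log N := by
    rw [Real.le_log_iff_exp_le (by linarith)]
    linarith [Real.exp_one_lt_d9]
  have hplogs : ∀ p ∈ (N + 1).primesBelow, σ * Real.log p ≤ 1 := by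
    intro p hp
    have hpN : p ≤ N := by
      have := Nat.lt_of_mem_primesBelow hp
      omega
    have hp1 : (1:ℝ) ≤ p := by exact_mod_cast (Nat.prime_of_mem_primesBelow hp).one_le
    have : Real.log p ≤ Real.log N :=
      Real.log_le_log (by linarith) (by exact_mod_cast hpN)
    calc σ * Real.log p ≤ σ * Real.log N := by
          apply mul_le_mul_of_nonneg_left this hσ.le
      _ ≤ 1 := hσlogN
  have step1 : ∏ p ∈ (N + 1).primesBelow, (1 - (p : ℝ) ^ (σ - 1))⁻¹ ≤
      Real.exp (∑ p ∈ (N + 1).primesBelow,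
        (1 / p + 3 * σ * (Real.log p / p) + 64 / (p : ℝ) ^ 2)) := by
    rw [Real.exp_sum]
    apply Finset.prod_le_prod
    · intro p hp
      have hp2 : (2:ℝ) ≤ p := by exact_mod_cast (Nat.prime_of_mem_primesBelow hp).two_le
      have := t_le_three_quarters hσ2 hp2
      have : (0:ℝ) < 1 - (p:ℝ) ^ (σ - 1) := by linarith
      positivity
    · intro p hp
      exact factor_bound hσ hσ2 (Nat.prime_of_mem_primesBelow hp) (hplogs p hp)
  have hsplit : ∑ p ∈ (N + 1).primesBelow,
      (1 / (p:ℝ) + 3 * σ * (Real.log p / p) + 64 / (p : ℝ) ^ 2) =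
      (∑ p ∈ (N + 1).primesBelow, 1 / (p:ℝ)) +
        3 * σ * (∑ p ∈ (N + 1).primesBelow, Real.log p / p) +
        64 * (∑ p ∈ (N + 1).primesBelow, 1 / (p:ℝ) ^ 2) := by
    rw [Finset.sum_add_distrib, Finset.sum_add_distrib, Finset.mul_sum, Finset.mul_sum]
    congr 1
    apply Finset.sum_congr rfl
    intro p _
    ring
  have h1 := sum_one_div_prime_le N hN2
  have h2 := sum_logp_div_prime_le N hN2
  have h3 := sum_inv_sq_prime_le N hN2
  -- numerics
  set L := Real.log 4 with hL_def
  have hL0 : 0 ≤ L := Real.log_nonneg (by norm_num)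
  have hL32 : L ≤ 3 / 2 := by
    rw [hL_def, show (4:ℝ) = 2 ^ 2 by norm_num, Real.log_pow]
    push_cast
    linarith [Real.log_two_lt_d9]
  set A := Real.log (Real.log N) with hA_def
  have hA0 : 0 ≤ A := Real.log_nonneg hlogN1
  have hσlogN0 : 0 ≤ σ * Real.log N := mul_nonneg hσ.le (by linarith)
  have hsum2nonneg : 0 ≤ ∑ p ∈ (N + 1).primesBelow, Real.log p / (p:ℝ) := by
    apply Finset.sum_nonneg
    intro p hp
    have hp1 : (1:ℝ) ≤ p := by exact_mod_cast (Nat.prime_of_mem_primesBelow hp).one_le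
    have : 0 ≤ Real.log p := Real.log_nonneg hp1
    positivity
  have e1 : L * A ≤ (3 / 2) * B := by nlinarith
  have e3 : σ * L ≤ (1 / 2) * (3 / 2) := mul_le_mul hσ2 hL32 hL0 (by norm_num)
  have e4 : L * (σ * Real.log N) ≤ (3 / 2) * 1 :=
    mul_le_mul hL32 hσlogN hσlogN0 (by norm_num)
  have hbig : (∑ p ∈ (N + 1).primesBelow,
      (1 / (p:ℝ) + 3 * σ * (Real.log p / p) + 64 / (p : ℝ) ^ 2)) ≤ 2 * B + 76 := by
    rw [hsplit]
    have t1 : (∑ p ∈ (N + 1).primesBelow, 1 / (p:ℝ)) ≤ L * (A + 3) := h1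
    have t2 : 3 * σ * (∑ p ∈ (N + 1).primesBelow, Real.log p / (p:ℝ)) ≤
        3 * σ * (L * (1 + Real.log N)) := by
      apply mul_le_mul_of_nonneg_left h2 (by positivity)
    have t3 : (64:ℝ) * (∑ p ∈ (N + 1).primesBelow, 1 / (p:ℝ) ^ 2) ≤ 64 * 1 := by
      apply mul_le_mul_of_nonneg_left h3 (by norm_num)
    have expand : 3 * σ * (L * (1 + Real.log N)) = 3 * (σ * L) + 3 * (L * (σ * Real.log N)) := by
      ring
    nlinarith [t1, t2, t3, e1, e3, e4, hL0, hA0, hB0]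
  calc ∏ p ∈ (N + 1).primesBelow, (1 - (p : ℝ) ^ (σ - 1))⁻¹
      ≤ Real.exp (∑ p ∈ (N + 1).primesBelow,
          (1 / p + 3 * σ * (Real.log p / p) + 64 / (p : ℝ) ^ 2)) := step1
    _ ≤ Real.exp (2 * B + 76) := Real.exp_le_exp.mpr hbig
theorem stmt3 :
    ∃ C > 0, ∀ x y : ℝ, 10 ≤ y → y ≤ x →
      (∑' d : ℕ, if x < (d : ℝ) ∧ ∀ p ∈ Nat.primeFactors d, (p : ℝ) ≤ y then 1 / (d : ℝ) else 0) ≤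
        C * Real.log y ^ 3 / x ^ (1 / Real.log y) := by
  refine ⟨Real.exp 76, Real.exp_pos 76, fun x y hy hxy => ?_⟩
  have hy0 : (0:ℝ) < y := by linarith
  have hx0 : (0:ℝ) < x := by linarith
  have hexp2 : Real.exp 2 ≤ 10 := by
    have h := Real.exp_one_lt_d9
    have h2 : Real.exp 2 = Real.exp 1 * Real.exp 1 := by
      rw [← Real.exp_add]; norm_num
    nlinarith [Real.exp_pos 1]
  have hlogy : 2 ≤ Real.log y := by
    rw [Real.le_log_iff_exp_le hy0]; linarith
  set σ := 1 / Real.log y with hσ_def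
  have hσ : 0 < σ := by positivity
  have hσ2 : σ ≤ 1 / 2 := by
    rw [hσ_def, div_le_iff₀ (by linarith : (0:ℝ) < Real.log y)]
    linarith
  have hσlogy : σ * Real.log y = 1 := by
    rw [hσ_def]; field_simp
  set N := ⌊y⌋₊ with hN_def
  have hN10 : 10 ≤ N := Nat.le_floor (by exact_mod_cast hy)
  have hNy : (N:ℝ) ≤ y := Nat.floor_le hy0.le
  have hN0 : (0:ℝ) < N := by
    have : (10:ℝ) ≤ N := by exact_mod_cast hN10
    linarith
  have hlogNy : Real.log N ≤ Real.log y := Real.log_le_log hN0 hNy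
  have hlogN1 : 1 ≤ Real.log N := by
    rw [Real.le_log_iff_exp_le hN0]
    have : (10:ℝ) ≤ N := by exact_mod_cast hN10
    nlinarith [Real.exp_one_lt_d9, Real.exp_pos 1]
  have hσlogN : σ * Real.log N ≤ 1 := by
    calc σ * Real.log N ≤ σ * Real.log y := mul_le_mul_of_nonneg_left hlogNy hσ.le
      _ = 1 := hσlogy
  set c := σ - 1 with hc_def
  have hc : c < 0 := by rw [hc_def]; linarith
  -- Euler product over (N+1)-smooth numbers
  have hnorm : ∀ {p : ℕ}, p.Prime → ‖rpowHom c p‖ < 1 := by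
    intro p hp
    have h1 : (1:ℝ) < p := by exact_mod_cast hp.one_lt
    rw [rpowHom_apply, Real.norm_eq_abs,
      abs_of_nonneg (Real.rpow_nonneg (by positivity) c)]
    exact Real.rpow_lt_one_of_one_lt_of_neg h1 hc
  obtain ⟨hsum1, hHasSum⟩ :=
    EulerProduct.summable_and_hasSum_smoothNumbers_prod_primesBelow_geometric
      (f := rpowHom c) hnorm (N + 1)
  set I : ℕ → ℝ := Set.indicator (Nat.smoothNumbers (N + 1)) (fun d => (d:ℝ) ^ c) with hI_def
  have hIsum : Summable I := by
    apply summable_subtype_iff_indicator.mp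
    exact hHasSum.summable
  have hItsum : ∑' d, I d = ∏ p ∈ (N + 1).primesBelow, (1 - (p:ℝ) ^ c)⁻¹ := by
    rw [hI_def, ← _root_.tsum_subtype]
    have h := hHasSum.tsum_eq
    simpa using h
  have hxσ : 0 < x ^ σ := Real.rpow_pos_of_pos hx0 σ
  have hle : ∀ d : ℕ,
      (if x < (d : ℝ) ∧ ∀ p ∈ Nat.primeFactors d, (p : ℝ) ≤ y then 1 / (d : ℝ) else 0) ≤
        (x ^ σ)⁻¹ * I d := by
    intro d
    by_cases hcond : x < (d : ℝ) ∧ ∀ p ∈ Nat.primeFactors d, (p : ℝ) ≤ y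
    · rw [if_pos hcond]
      have hd0 : (0:ℝ) < d := by linarith [hcond.1]
      have hdnat : d ≠ 0 := (Nat.cast_pos.mp hd0).ne'
      have hmem : d ∈ Nat.smoothNumbers (N + 1) := by
        apply Nat.mem_smoothNumbers_of_primeFactors_subset hdnat
        intro p hp
        have hp_prime := Nat.prime_of_mem_primeFactors hp
        have hpy := hcond.2 p hp
        have hpN : p ≤ N := Nat.le_floor hpy
        exact Finset.mem_range.mpr (Nat.lt_succ_of_le hpN)
      rw [hI_def, Set.indicator_of_mem hmem]
      have h1 : x ^ σ ≤ (d:ℝ) ^ σ := Real.rpow_le_rpow hx0.le hcond.1.le hσ.le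
      have hdc : (d:ℝ) ^ c = (d:ℝ) ^ σ / d := by
        rw [hc_def, Real.rpow_sub hd0, Real.rpow_one]
      rw [hdc]
      have heq : (x ^ σ)⁻¹ * ((d:ℝ) ^ σ / d) = (d:ℝ) ^ σ / (x ^ σ * d) := by
        field_simp
      rw [heq, div_le_div_iff₀ hd0 (by positivity)]
      calc 1 * (x ^ σ * d) = x ^ σ * d := one_mul _
        _ ≤ (d:ℝ) ^ σ * d := mul_le_mul_of_nonneg_right h1 hd0.le
    · rw [if_neg hcond]
      have hI0 : 0 ≤ I d :=
        Set.indicator_nonneg (fun a _ => Real.rpow_nonneg (Nat.cast_nonneg a) c) d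
      positivity
  have hRHSsum : Summable (fun d => (x ^ σ)⁻¹ * I d) := hIsum.mul_left _
  have hg0 : ∀ d : ℕ,
      0 ≤ (if x < (d : ℝ) ∧ ∀ p ∈ Nat.primeFactors d, (p : ℝ) ≤ y then 1 / (d : ℝ) else 0) := by
    intro d
    split
    · positivity
    · exact le_refl 0
  have hgsum : Summable (fun d : ℕ =>
      if x < (d : ℝ) ∧ ∀ p ∈ Nat.primeFactors d, (p : ℝ) ≤ y then 1 / (d : ℝ) else 0) :=
    Summable.of_nonneg_of_le hg0 hle hRHSsum
  have hB : Real.log (Real.log N) ≤ Real.log (Real.log y) :=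
    Real.log_le_log (by linarith) hlogNy
  have hB0 : 0 ≤ Real.log (Real.log y) := Real.log_nonneg (by linarith)
  have hprod := prod_bound hσ hσ2 hN10 hσlogN hB hB0
  calc (∑' d : ℕ, if x < (d : ℝ) ∧ ∀ p ∈ Nat.primeFactors d, (p : ℝ) ≤ y then 1 / (d : ℝ) else 0)
      ≤ ∑' d : ℕ, (x ^ σ)⁻¹ * I d := Summable.tsum_le_tsum hle hgsum hRHSsum
    _ = (x ^ σ)⁻¹ * ∑' d, I d := tsum_mul_left
    _ = (x ^ σ)⁻¹ * ∏ p ∈ (N + 1).primesBelow, (1 - (p:ℝ) ^ c)⁻¹ := by rw [hItsum]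
    _ ≤ (x ^ σ)⁻¹ * Real.exp (2 * Real.log (Real.log y) + 76) := by
        exact mul_le_mul_of_nonneg_left hprod (inv_nonneg.mpr hxσ.le)
    _ ≤ Real.exp 76 * Real.log y ^ 3 / x ^ σ := by
        have hexp_eq : Real.exp (2 * Real.log (Real.log y) + 76) =
            Real.exp 76 * Real.log y ^ 2 := by
          rw [Real.exp_add, two_mul, Real.exp_add,
            Real.exp_log (by linarith : 0 < Real.log y)]
          ring
        rw [hexp_eq, div_eq_mul_inv]
        have h23 : Real.log y ^ 2 ≤ Real.log y ^ 3 := by nlinarith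
        calc (x ^ σ)⁻¹ * (Real.exp 76 * Real.log y ^ 2)
            = Real.exp 76 * Real.log y ^ 2 * (x ^ σ)⁻¹ := by ring
          _ ≤ Real.exp 76 * Real.log y ^ 3 * (x ^ σ)⁻¹ := by
              apply mul_le_mul_of_nonneg_right _ (inv_nonneg.mpr hxσ.le)
              exact mul_le_mul_of_nonneg_left h23 (Real.exp_pos 76).le
end

section
/- Define α(d) = ∏_{p|d}(1 − 1/(p−1)) and α₁(d) = Σ_{p|d} 1/(p−1), and let p(d) denote the smallest prime factor of d. If K ≥ 1 and d is a squarefree odd integer with d > 1 and ω(d) ≤ K, then |1 − α(d) − α₁(d)| ≤ 4e^K / p(d)². -/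
open Real Filter Finset

/-- `α(d) = ∏_{p ∣ d} (1 - 1/(p-1))`. -/
noncomputable def alphaFn (d : ℕ) : ℝ := ∏ p ∈ d.primeFactors, (1 - 1 / ((p : ℝ) - 1))

/-- `α₁(d) = ∑_{p ∣ d} 1/(p-1)`. -/
noncomputable def alphaOne (d : ℕ) : ℝ := ∑ p ∈ d.primeFactors, 1 / ((p : ℝ) - 1)

private lemma lower_aux {ι : Type*} (s : Finset ι) (f : ι → ℝ)
    (h0 : ∀ i ∈ s, 0 ≤ f i) (h1 : ∀ i ∈ s, f i ≤ 1) :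
    1 - ∑ i ∈ s, f i ≤ ∏ i ∈ s, (1 - f i) := by
  classical
  induction s using Finset.induction_on with
  | empty => simp
  | @insert a s' hx ih =>
    rw [Finset.sum_insert hx, Finset.prod_insert hx]
    have hf0 : 0 ≤ f a := h0 a (Finset.mem_insert_self a s')
    have hf1 : f a ≤ 1 := h1 a (Finset.mem_insert_self a s')
    have ih' := ih (fun i hi => h0 i (Finset.mem_insert_of_mem hi))
      (fun i hi => h1 i (Finset.mem_insert_of_mem hi))
    have hs0 : 0 ≤ ∑ i ∈ s', f i :=
      Finset.sum_nonneg fun i hi => h0 i (Finset.mem_insert_of_mem hi)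
    nlinarith [mul_nonneg hf0 hs0]

private lemma upper_aux {ι : Type*} (s : Finset ι) (f : ι → ℝ)
    (h0 : ∀ i ∈ s, 0 ≤ f i) :
    1 + ∑ i ∈ s, f i ≤ ∏ i ∈ s, (1 + f i) := by
  classical
  induction s using Finset.induction_on with
  | empty => simp
  | @insert a s' hx ih =>
    rw [Finset.sum_insert hx, Finset.prod_insert hx]
    have hf0 : 0 ≤ f a := h0 a (Finset.mem_insert_self a s')
    have ih' := ih (fun i hi => h0 i (Finset.mem_insert_of_mem hi))
    have hs0 : 0 ≤ ∑ i ∈ s', f i :=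
      Finset.sum_nonneg fun i hi => h0 i (Finset.mem_insert_of_mem hi)
    nlinarith [mul_nonneg hf0 hs0]

private lemma sq_le_exp_nat (K : ℕ) : (K : ℝ) ^ 2 ≤ Real.exp K := by
  induction K with
  | zero => simp [Real.exp_nonneg]
  | succ n ih =>
    rcases Nat.lt_or_ge n 2 with h | h
    · have h2 : (2:ℝ) ≤ Real.exp 1 := by
        have := Real.add_one_le_exp (1 : ℝ); linarith
      interval_cases n
      · have : ((0+1:ℕ):ℝ)^2 = 1 := by norm_num
        rw [this]
        calc (1:ℝ) ≤ Real.exp 1 := by linarith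
          _ = Real.exp ((0+1:ℕ):ℝ) := by norm_num
      · have h4 : (4:ℝ) ≤ Real.exp 1 * Real.exp 1 := by nlinarith [Real.exp_pos (1:ℝ)]
        have : ((1+1:ℕ):ℝ)^2 = 4 := by norm_num
        rw [this]
        calc (4:ℝ) ≤ Real.exp 1 * Real.exp 1 := h4
          _ = Real.exp ((1+1:ℕ):ℝ) := by rw [← Real.exp_add]; norm_num
    · have hn : (2:ℝ) ≤ n := by exact_mod_cast h
      have he : Real.exp ((n:ℝ) + 1) = Real.exp 1 * Real.exp n := by
        rw [← Real.exp_add]; ring_nf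
      have h2 : (9/4:ℝ) ≤ Real.exp 1 := by
        have := Real.exp_one_gt_d9; linarith
      have key : ((n:ℝ) + 1)^2 ≤ (9/4) * (n:ℝ)^2 := by nlinarith
      have : ((n:ℕ)+1 : ℝ)^2 ≤ Real.exp 1 * Real.exp n := by
        push_cast
        calc ((n:ℝ)+1)^2 ≤ (9/4) * (n:ℝ)^2 := key
          _ ≤ Real.exp 1 * Real.exp n := by
              have hexp : (0:ℝ) ≤ (n:ℝ)^2 := sq_nonneg _
              nlinarith [Real.exp_pos (n:ℝ)]
      calc ((n+1:ℕ) : ℝ)^2 = ((n:ℕ)+1 : ℝ)^2 := by push_cast; ring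
        _ ≤ Real.exp 1 * Real.exp n := this
        _ = Real.exp ((n+1:ℕ) : ℝ) := by rw [← Real.exp_add]; push_cast; ring_nf

theorem stmt9 (K : ℕ) (hK : 1 ≤ K) (d : ℕ) (hsq : Squarefree d) (hodd : Odd d)
    (hd : 1 < d) (hω : d.primeFactors.card ≤ K) :
    |1 - alphaFn d - alphaOne d| ≤ 4 * Real.exp K / (d.minFac : ℝ) ^ 2 := by
  classical
  set P := d.primeFactors with hP
  set q := d.minFac with hq
  have hd0 : d ≠ 0 := by omega
  have hd1 : d ≠ 1 := by omega
  -- every prime in P is ≥ 3 and ≥ q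
  have hmem : ∀ p ∈ P, Nat.Prime p ∧ p ∣ d := fun p hp =>
    ⟨Nat.prime_of_mem_primeFactors hp, Nat.dvd_of_mem_primeFactors hp⟩
  have hodd' : ∀ p ∈ P, 3 ≤ p := by
    intro p hp
    obtain ⟨hpp, hpd⟩ := hmem p hp
    have h2 : p ≠ 2 := by
      rintro rfl
      exact (Nat.not_even_iff_odd.mpr hodd) ((even_iff_two_dvd).mpr hpd)
    have := hpp.two_le
    omega
  have hq3 : 3 ≤ q := by
    have hqp : Nat.Prime q := Nat.minFac_prime hd1
    have hqd : q ∣ d := Nat.minFac_dvd d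
    have h2 : q ≠ 2 := by
      intro h
      exact (Nat.not_even_iff_odd.mpr hodd) ((even_iff_two_dvd).mpr (h ▸ hqd))
    have := hqp.two_le
    omega
  have hqle : ∀ p ∈ P, q ≤ p := by
    intro p hp
    obtain ⟨hpp, hpd⟩ := hmem p hp
    exact Nat.minFac_le_of_dvd hpp.two_le hpd
  -- x p := 1/(p-1) bounds
  set x : ℕ → ℝ := fun p => 1 / ((p : ℝ) - 1) with hx
  have hx0 : ∀ p ∈ P, 0 ≤ x p := by
    intro p hp
    have : (3:ℝ) ≤ p := by exact_mod_cast hodd' p hp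
    simp only [hx]
    apply div_nonneg (by norm_num)
    linarith
  have hx1 : ∀ p ∈ P, x p ≤ 1/2 := by
    intro p hp
    have : (3:ℝ) ≤ p := by exact_mod_cast hodd' p hp
    rw [hx]
    rw [div_le_div_iff₀ (by linarith) (by norm_num)]
    linarith
  have hxq : ∀ p ∈ P, x p ≤ 2 / q := by
    intro p hp
    have h3 : (3:ℝ) ≤ p := by exact_mod_cast hodd' p hp
    have hqp : (q:ℝ) ≤ p := by exact_mod_cast hqle p hp
    have hq0 : (0:ℝ) < q := by
      have : (3:ℝ) ≤ q := by exact_mod_cast hq3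
      linarith
    rw [hx]
    rw [div_le_div_iff₀ (by linarith) hq0]
    nlinarith
  -- S bounds
  set S := alphaOne d with hS
  have hSx : S = ∑ p ∈ P, x p := rfl
  have hS0 : 0 ≤ S := Finset.sum_nonneg hx0
  have hSle : S ≤ 2 * K / q := by
    have hq0 : (0:ℝ) < q := by
      have : (3:ℝ) ≤ q := by exact_mod_cast hq3; 
      linarith
    calc S ≤ ∑ _p ∈ P, (2 / (q:ℝ)) := Finset.sum_le_sum hxq
      _ = P.card * (2 / q) := by rw [Finset.sum_const, nsmul_eq_mul]
      _ ≤ K * (2 / q) := by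
          apply mul_le_mul_of_nonneg_right _ (by positivity)
          exact_mod_cast hω
      _ = 2 * K / q := by ring
  -- lower bound: alphaFn d ≥ 1 - S
  have hlow : 1 - S ≤ alphaFn d := by
    rw [hSx]
    exact lower_aux P x hx0 (fun p hp => le_trans (hx1 p hp) (by norm_num))
  -- upper bound: alphaFn d ≤ 1 - S + S^2
  have hup : alphaFn d ≤ 1 - S + S ^ 2 := by
    have step1 : alphaFn d ≤ ∏ p ∈ P, (1 / (1 + x p)) := by
      apply Finset.prod_le_prod
      · intro p hp
        have := hx1 p hp; linarith [hx0 p hp]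
      · intro p hp
        have h0 := hx0 p hp
        rw [le_div_iff₀ (by linarith)]
        nlinarith
    have step2 : ∏ p ∈ P, (1 / (1 + x p)) = 1 / ∏ p ∈ P, (1 + x p) := by
      simp only [one_div]
      rw [← Finset.prod_inv_distrib]
    have hW : 1 + S ≤ ∏ p ∈ P, (1 + x p) := hSx ▸ upper_aux P x hx0
    have hprodpos : (0:ℝ) < ∏ p ∈ P, (1 + x p) := by
      apply Finset.prod_pos
      intro p hp; have := hx0 p hp; linarith
    have step3 : 1 / ∏ p ∈ P, (1 + x p) ≤ 1 / (1 + S) := by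
      apply one_div_le_one_div_of_le (by linarith) hW
    have step4 : 1 / (1 + S) ≤ 1 - S + S ^ 2 := by
      rw [div_le_iff₀ (by linarith)]
      nlinarith
    calc alphaFn d ≤ ∏ p ∈ P, (1 / (1 + x p)) := step1
      _ = 1 / ∏ p ∈ P, (1 + x p) := step2
      _ ≤ 1 / (1 + S) := step3
      _ ≤ 1 - S + S ^ 2 := step4
  -- combine
  have habs : |1 - alphaFn d - alphaOne d| ≤ S ^ 2 := by
    rw [abs_le]
    constructor <;> [skip; skip] <;> rw [← hS] <;> nlinarith
  have hq0 : (0:ℝ) < q := by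
    have : (3:ℝ) ≤ q := by exact_mod_cast hq3
    linarith
  have hK2 : (K:ℝ)^2 ≤ Real.exp K := sq_le_exp_nat K
  calc |1 - alphaFn d - alphaOne d| ≤ S ^ 2 := habs
    _ ≤ (2 * K / q) ^ 2 := by
        apply pow_le_pow_left₀ hS0 hSle
    _ = 4 * (K:ℝ)^2 / (q:ℝ)^2 := by field_simp; ring
    _ ≤ 4 * Real.exp K / (q:ℝ)^2 := by
        apply div_le_div_of_nonneg_right _ (by positivity)
        · linarith
end
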